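/- Let Z* ∈ ℝ^g and n_0 ∈ ℤ. Then there exists t_0 such that for every integer t ≥ t_0 there exists δ_0 > 0 such that for every δ ≥ δ_0 and every integer n with n_0 ≤ n ≤ n_0 + g + 1, the point Z* − (n − n_0)(L + δ)e_1 + tλ⃗ belongs to D̃_{m_n}, where m_n = 𝕀_1 + 𝕀_2 + ⋯ + 𝕀_{n−n_0−1} (with m_n = 0 for n ∈ {n_0, n_0+1}). -/

import Mathlib

open Matrix Finset

noncomputable section

namespace TropToda

variable (g : ℕ)

/-- The summand `(1/2) m K mᵀ + m Zᵀ` in the definition of the tropical theta function. -/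
def thetaTerm (K : Matrix (Fin g) (Fin g) ℝ) (m : Fin g → ℤ) (Z : Fin g → ℝ) : ℝ :=
  (1/2) * (Matrix.vecMul (fun i => (m i : ℝ)) K ⬝ᵥ fun i => (m i : ℝ))
    + (fun i => (m i : ℝ)) ⬝ᵥ Z

/-- The tropical Riemann theta function associated with `K`. -/
def theta (K : Matrix (Fin g) (Fin g) ℝ) (Z : Fin g → ℝ) : ℝ :=
  sInf (Set.range fun m : Fin g → ℤ => thetaTerm g K m Z)

/-- The fundamental region `D_m`. -/
def Dset (K : Matrix (Fin g) (Fin g) ℝ) (m : Fin g → ℤ) : Set (Fin g → ℝ) :=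
  {Z | theta g K Z = thetaTerm g K m Z}

/-- The generic condition on `C = (C_{-1}, C_0, …, C_g)`. -/
def Generic (C : ℤ → ℝ) : Prop :=
  C (-1) > 2 * C 0 ∧
  (∀ i : ℤ, 0 ≤ i → i ≤ (g : ℤ) - 2 → C i + C (i + 2) > 2 * C (i + 1)) ∧
  C ((g : ℤ) - 1) > 2 * C (g : ℤ)

/-- `L = C_{-1} − 2(g+1) C_g`. -/
def Lc (C : ℤ → ℝ) : ℝ := C (-1) - 2 * (g + 1) * C (g : ℤ)

/-- `λ_0 = C_g`, `λ_i = C_{g−i} − C_{g−i+1}` for `1 ≤ i ≤ g`. -/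
def lam (C : ℤ → ℝ) (i : ℕ) : ℝ :=
  if i = 0 then C (g : ℤ) else C ((g : ℤ) - i) - C ((g : ℤ) - i + 1)

/-- `p_0 = L`, `p_i = L − 2 ∑_{j=1}^g min(λ_i − λ_0, λ_j − λ_0)`. -/
def pc (C : ℤ → ℝ) (i : ℕ) : ℝ :=
  if i = 0 then Lc g C
  else Lc g C - 2 * ∑ j ∈ Finset.Icc 1 g,
    min (lam g C i - lam g C 0) (lam g C j - lam g C 0)

/-- The tridiagonal period matrix `K` (0-based index `a` corresponds to the paper's `a+1`). -/
def Kmat (C : ℤ → ℝ) : Matrix (Fin g) (Fin g) ℝ := fun a b =>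
  if a = b then
    pc g C (a : ℕ) + pc g C ((a : ℕ) + 1) + 2 * (lam g C ((a : ℕ) + 1) - lam g C (a : ℕ))
  else if (a : ℕ) + 1 = (b : ℕ) then -(pc g C ((a : ℕ) + 1))
  else if (b : ℕ) + 1 = (a : ℕ) then -(pc g C ((b : ℕ) + 1))
  else 0

/-- The first standard basis (row) vector `e_1`. -/
def e1 : Fin g → ℝ := fun i => if (i : ℕ) = 0 then 1 else 0

/-- `λ⃗ = (λ_1 − λ_0, …, λ_g − λ_{g−1})`. -/
def lamvec (C : ℤ → ℝ) : Fin g → ℝ := fun i => lam g C ((i : ℕ) + 1) - lam g C (i : ℕ)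

/-- `Z_n^t = Z_0 − nL e_1 + t λ⃗`. -/
def Zpt (C : ℤ → ℝ) (Z0 : Fin g → ℝ) (n t : ℤ) : Fin g → ℝ :=
  fun i => Z0 i - (n : ℝ) * Lc g C * e1 g i + (t : ℝ) * lamvec g C i

/-- `T_n^t = Θ(Z_n^t)`. -/
def Tf (C : ℤ → ℝ) (Z0 : Fin g → ℝ) (n t : ℤ) : ℝ :=
  theta g (Kmat g C) (Zpt g C Z0 n t)

/-- `Q_n^t = T_{n−1}^t + T_n^{t+1} − T_{n−1}^{t+1} − T_n^t + C_g`. -/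
def Qf (C : ℤ → ℝ) (Z0 : Fin g → ℝ) (n t : ℤ) : ℝ :=
  Tf g C Z0 (n - 1) t + Tf g C Z0 n (t + 1) - Tf g C Z0 (n - 1) (t + 1)
    - Tf g C Z0 n t + C (g : ℤ)

/-- `W_n^t = L + T_{n−1}^{t+1} + T_{n+1}^t − T_n^t − T_n^{t+1} + C_g`. -/
def Wf (C : ℤ → ℝ) (Z0 : Fin g → ℝ) (n t : ℤ) : ℝ :=
  Lc g C + Tf g C Z0 (n - 1) (t + 1) + Tf g C Z0 (n + 1) t - Tf g C Z0 n t
    - Tf g C Z0 n (t + 1) + C (g : ℤ)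

/-- `σ_t ∘ ι_t : ℝ^g → ℝ^{2(g+1)}`, recording `(Q_n^t, W_n^t)_{n ∈ ℤ/(g+1)ℤ}`. -/
def sigmaIota (C : ℤ → ℝ) (t : ℤ) (Z0 : Fin g → ℝ) :
    (ZMod (g + 1) → ℝ) × (ZMod (g + 1) → ℝ) :=
  (fun n => Qf g C Z0 (n.val : ℤ) t, fun n => Wf g C Z0 (n.val : ℤ) t)

/-- The tridiagonal matrix `J` with `2` on the diagonal and `−1` off it. -/
def Jmat : Matrix (Fin g) (Fin g) ℝ := fun a b =>
  if a = b then 2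
  else if (a : ℕ) + 1 = (b : ℕ) then -1
  else if (b : ℕ) + 1 = (a : ℕ) then -1
  else 0

/-- `X_n = min_{k=0,…,g} ∑_{l=1}^k (W_{n−l} − Q_{n−l})`, indices mod `g+1`. -/
def todaX (Q W : ZMod (g + 1) → ℝ) (n : ZMod (g + 1)) : ℝ :=
  ⨅ k : Fin (g + 1), ∑ l ∈ Finset.Icc 1 (k : ℕ),
    (W (n - (l : ZMod (g + 1))) - Q (n - (l : ZMod (g + 1))))

/-- The ultra-discrete periodic Toda evolution map. -/
def todaMap (QW : (ZMod (g + 1) → ℝ) × (ZMod (g + 1) → ℝ)) :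
    (ZMod (g + 1) → ℝ) × (ZMod (g + 1) → ℝ) :=
  (fun n => min (QW.2 n) (QW.1 n - todaX g QW.1 QW.2 n),
   fun n => QW.1 (n + 1) + QW.2 n - min (QW.2 n) (QW.1 n - todaX g QW.1 QW.2 n))

/-- `Z̃_n^t = Z_{n_0}^0 − (n − n_0)(L + δ) e_1 + t λ⃗`. -/
def Ztil (C : ℤ → ℝ) (Z0 : Fin g → ℝ) (n0 : ℤ) (δ : ℝ) (n t : ℤ) : Fin g → ℝ :=
  fun i => Zpt g C Z0 n0 0 i - ((n : ℝ) - (n0 : ℝ)) * (Lc g C + δ) * e1 g i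
    + (t : ℝ) * lamvec g C i

/-- The theta function `Θ̃` associated with `K̃ = K + δJ`. -/
def thetaTil (C : ℤ → ℝ) (δ : ℝ) (Z : Fin g → ℝ) : ℝ :=
  theta g (Kmat g C + δ • Jmat g) Z

/-- `Q̃_n`. -/
def Qtil (C : ℤ → ℝ) (Z0 : Fin g → ℝ) (n0 : ℤ) (δ : ℝ) (n : ℤ) : ℝ :=
  thetaTil g C δ (Ztil g C Z0 n0 δ (n - 1) 0) + thetaTil g C δ (Ztil g C Z0 n0 δ n 1)
    - thetaTil g C δ (Ztil g C Z0 n0 δ (n - 1) 1) - thetaTil g C δ (Ztil g C Z0 n0 δ n 0)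

/-- `W̃_n`. -/
def Wtil (C : ℤ → ℝ) (Z0 : Fin g → ℝ) (n0 : ℤ) (δ : ℝ) (n : ℤ) : ℝ :=
  (Lc g C + δ) + thetaTil g C δ (Ztil g C Z0 n0 δ (n - 1) 1)
    + thetaTil g C δ (Ztil g C Z0 n0 δ (n + 1) 0)
    - thetaTil g C δ (Ztil g C Z0 n0 δ n 0) - thetaTil g C δ (Ztil g C Z0 n0 δ n 1)

end TropToda

namespace DtilAux
open TropToda Finset Matrix

variable {g : ℕ}

/-- 1-based extension by zero of a vector indexed by `Fin g`. -/
def E (g : ℕ) (f : Fin g → ℝ) (n : ℕ) : ℝ :=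
  if h : 1 ≤ n ∧ n ≤ g then f ⟨n - 1, by omega⟩ else 0

lemma E_succ (f : Fin g → ℝ) (i : Fin g) : E g f ((i : ℕ) + 1) = f i := by
  have h : 1 ≤ (i : ℕ) + 1 ∧ (i : ℕ) + 1 ≤ g := ⟨by omega, i.2⟩
  rw [E, dif_pos h]
  exact congrArg f (Fin.ext (by simp))

lemma E_zero (f : Fin g → ℝ) : E g f 0 = 0 := by
  rw [E, dif_neg]; omega

lemma E_of_gt (f : Fin g → ℝ) {n : ℕ} (h : g < n) : E g f n = 0 := by
  rw [E, dif_neg]; omega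

lemma dot_eq_sum (u v : Fin g → ℝ) :
    u ⬝ᵥ v = ∑ i ∈ range g, E g u (i + 1) * E g v (i + 1) := by
  rw [dotProduct]
  rw [← Fin.sum_univ_eq_sum_range (fun i => E g u (i + 1) * E g v (i + 1)) g]
  exact Finset.sum_congr rfl fun i _ => by rw [E_succ, E_succ]

lemma vecMul_dot (M : Matrix (Fin g) (Fin g) ℝ) (u v : Fin g → ℝ) :
    Matrix.vecMul u M ⬝ᵥ v = ∑ j : Fin g, (∑ i : Fin g, u i * M i j) * v j := by
  rfl

lemma Jmat_split (i j : Fin g) :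
    Jmat g i j = (if i = j then 2 else 0) + (if (i : ℕ) + 1 = (j : ℕ) then -1 else 0)
      + (if (j : ℕ) + 1 = (i : ℕ) then -1 else 0) := by
  rw [Jmat]
  have hij : i = j ↔ (i : ℕ) = (j : ℕ) := Fin.ext_iff
  split_ifs <;> simp_all <;> omega

lemma J_inner (u : Fin g → ℝ) (j : Fin g) :
    (∑ i : Fin g, u i * Jmat g i j)
      = 2 * E g u ((j : ℕ) + 1) - E g u (j : ℕ) - E g u ((j : ℕ) + 2) := by
  have : ∀ i : Fin g, u i * Jmat g i j
      = (if i = j then u i * 2 else 0) + (if (i : ℕ) + 1 = (j : ℕ) then u i * (-1) else 0)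
        + (if (j : ℕ) + 1 = (i : ℕ) then u i * (-1) else 0) := by
    intro i; rw [Jmat_split]; split_ifs <;> ring
  rw [Finset.sum_congr rfl fun i _ => this i]
  rw [Finset.sum_add_distrib, Finset.sum_add_distrib]
  have h1 : (∑ i : Fin g, if i = j then u i * 2 else 0) = 2 * E g u ((j : ℕ) + 1) := by
    rw [Finset.sum_ite_eq' univ j (fun i => u i * 2), if_pos (mem_univ j), E_succ]; ring
  have h2 : (∑ i : Fin g, if (i : ℕ) + 1 = (j : ℕ) then u i * (-1) else 0)
      = -E g u (j : ℕ) := by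
    rcases Nat.eq_zero_or_pos (j : ℕ) with hj | hj
    · rw [hj, E_zero, Finset.sum_eq_zero, neg_zero]
      intro i _; rw [if_neg]; omega
    · have hjg : (j : ℕ) - 1 < g := by have := j.2; omega
      have : ∀ i : Fin g, ((i : ℕ) + 1 = (j : ℕ)) = (i = ⟨(j : ℕ) - 1, hjg⟩) := by
        intro i; rw [Fin.ext_iff]; simp only [eq_iff_iff]; constructor <;> intro <;> omega
      simp only [this]
      rw [Finset.sum_ite_eq' univ _ (fun i => u i * (-1)), if_pos (mem_univ _)]
      rw [E, dif_pos ⟨hj, by omega⟩]; ring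
  have h3 : (∑ i : Fin g, if (j : ℕ) + 1 = (i : ℕ) then u i * (-1) else 0)
      = -E g u ((j : ℕ) + 2) := by
    by_cases hj : (j : ℕ) + 1 < g
    · have : ∀ i : Fin g, ((j : ℕ) + 1 = (i : ℕ)) = (i = ⟨(j : ℕ) + 1, hj⟩) := by
        intro i; rw [Fin.ext_iff]; simp only [eq_iff_iff]; constructor <;> intro <;> omega
      simp only [this]
      rw [Finset.sum_ite_eq' univ _ (fun i => u i * (-1)), if_pos (mem_univ _)]
      rw [E, dif_pos ⟨by omega, by omega⟩]
      have : (j : ℕ) + 2 - 1 = (j : ℕ) + 1 := by omega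
      simp only [this]; ring
    · rw [E_of_gt _ (by omega), Finset.sum_eq_zero, neg_zero]
      intro i _; rw [if_neg]; have := i.2; omega
  rw [h1, h2, h3]; ring

lemma J_bilinear (hg : 0 < g) (u v : Fin g → ℝ) :
    Matrix.vecMul u (Jmat g) ⬝ᵥ v
      = ∑ i ∈ range (g + 1), (E g u (i + 1) - E g u i) * (E g v (i + 1) - E g v i) := by
  rw [vecMul_dot]
  have lhs : (∑ j : Fin g, (∑ i : Fin g, u i * Jmat g i j) * v j)
      = ∑ j ∈ range g, (2 * E g u (j + 1) - E g u j - E g u (j + 2)) * E g v (j + 1) := by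
    rw [← Fin.sum_univ_eq_sum_range
      (fun j => (2 * E g u (j + 1) - E g u j - E g u (j + 2)) * E g v (j + 1)) g]
    exact Finset.sum_congr rfl fun j _ => by rw [J_inner, E_succ u j, E_succ v j]
  rw [lhs]
  have U := E g u
  have expand : ∀ i : ℕ, (E g u (i + 1) - E g u i) * (E g v (i + 1) - E g v i)
      = E g u (i + 1) * E g v (i + 1) - E g u (i + 1) * E g v i
        - E g u i * E g v (i + 1) + E g u i * E g v i := by
    intro i; ring
  rw [Finset.sum_congr rfl fun i _ => expand i]
  rw [show ∀ f₁ f₂ f₃ f₄ : ℕ → ℝ, (∑ i ∈ range (g+1), (f₁ i - f₂ i - f₃ i + f₄ i))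
      = (∑ i ∈ range (g+1), f₁ i) - (∑ i ∈ range (g+1), f₂ i)
        - (∑ i ∈ range (g+1), f₃ i) + (∑ i ∈ range (g+1), f₄ i) from
    fun f₁ f₂ f₃ f₄ => by
      simp only [Finset.sum_add_distrib, Finset.sum_sub_distrib]]
  have s1 : (∑ i ∈ range (g+1), E g u (i+1) * E g v (i+1)) = ∑ i ∈ range g, E g u (i+1) * E g v (i+1) := by
    rw [Finset.sum_range_succ, E_of_gt _ (by omega), zero_mul, add_zero]
  have s4 : (∑ i ∈ range (g+1), E g u i * E g v i) = ∑ i ∈ range g, E g u (i+1) * E g v (i+1) := by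
    rw [Finset.sum_range_succ' (fun i => E g u i * E g v i) g, E_zero, zero_mul, add_zero]
  have s2 : (∑ i ∈ range (g+1), E g u (i+1) * E g v i) = ∑ i ∈ range g, E g u (i+2) * E g v (i+1) := by
    rw [Finset.sum_range_succ' (fun i => E g u (i+1) * E g v i) g, E_zero, mul_zero, add_zero]
  have s3 : (∑ i ∈ range (g+1), E g u i * E g v (i+1)) = ∑ i ∈ range g, E g u i * E g v (i+1) := by
    rw [Finset.sum_range_succ, E_of_gt (f := v) (Nat.lt_succ_self g), mul_zero, add_zero]
  rw [s1, s2, s3, s4, ← Finset.sum_sub_distrib, ← Finset.sum_sub_distrib,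
    ← Finset.sum_add_distrib]
  exact Finset.sum_congr rfl fun i _ => by ring

end DtilAux
namespace DtilAux
open TropToda Finset Matrix
variable {g : ℕ}

lemma mem_Dset_of_min (K' : Matrix (Fin g) (Fin g) ℝ) (m : Fin g → ℤ) (Z : Fin g → ℝ)
    (h : ∀ x : Fin g → ℤ, thetaTerm g K' m Z ≤ thetaTerm g K' x Z) :
    Z ∈ Dset g K' m := by
  show theta g K' Z = thetaTerm g K' m Z
  apply le_antisymm
  · exact csInf_le ⟨thetaTerm g K' m Z, by rintro _ ⟨x, rfl⟩; exact h x⟩ ⟨m, rfl⟩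
  · exact le_csInf ⟨_, ⟨m, rfl⟩⟩ (by rintro _ ⟨x, rfl⟩; exact h x)

lemma Jmat_symm (i j : Fin g) : Jmat g i j = Jmat g j i := by
  unfold Jmat
  rcases eq_or_ne i j with h | h
  · subst h; simp
  · rw [if_neg h, if_neg (Ne.symm h)]
    split_ifs <;> first | rfl | omega

lemma Kmat_symm (C : ℤ → ℝ) (i j : Fin g) : Kmat g C i j = Kmat g C j i := by
  unfold Kmat
  rcases eq_or_ne i j with h | h
  · subst h; simp
  · rw [if_neg h, if_neg (Ne.symm h)]
    split_ifs <;> first | rfl | omega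

lemma cross_symm (M : Matrix (Fin g) (Fin g) ℝ) (hM : ∀ i j, M i j = M j i)
    (u v : Fin g → ℝ) : Matrix.vecMul u M ⬝ᵥ v = Matrix.vecMul v M ⬝ᵥ u := by
  rw [vecMul_dot, vecMul_dot]
  simp only [Finset.sum_mul]
  rw [Finset.sum_comm]
  exact Finset.sum_congr rfl fun j _ => Finset.sum_congr rfl fun i _ => by rw [hM]; ring

lemma thetaTerm_expand (K' : Matrix (Fin g) (Fin g) ℝ) (hK' : ∀ i j, K' i j = K' j i)
    (m x : Fin g → ℤ) (Z : Fin g → ℝ) :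
    thetaTerm g K' x Z = thetaTerm g K' m Z
      + (1/2 * (Matrix.vecMul (fun i => ((x i - m i : ℤ) : ℝ)) K'
            ⬝ᵥ fun i => ((x i - m i : ℤ) : ℝ))
        + (Matrix.vecMul (fun i => ((m i : ℤ) : ℝ)) K' ⬝ᵥ fun i => ((x i - m i : ℤ) : ℝ))
        + (fun i => ((x i - m i : ℤ) : ℝ)) ⬝ᵥ Z) := by
  have hx : (fun i => ((x i : ℤ) : ℝ)) = (fun i => ((m i : ℤ) : ℝ))
      + (fun i => ((x i - m i : ℤ) : ℝ)) := by
    funext i; simp only [Pi.add_apply]; push_cast; ring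
  unfold thetaTerm
  rw [hx]
  rw [Matrix.add_vecMul, add_dotProduct, dotProduct_add, dotProduct_add,
    add_dotProduct]
  rw [cross_symm K' hK' (fun i => ((x i - m i : ℤ) : ℝ)) (fun i => ((m i : ℤ) : ℝ))]
  ring

lemma int_le_sq (a : ℤ) : a ≤ a ^ 2 := by
  rcases le_or_gt a 0 with h | h
  · nlinarith [sq_nonneg a]
  · nlinarith [h]

lemma int_neg_le_sq (a : ℤ) : -a ≤ a ^ 2 := by nlinarith [int_le_sq (-a)]

lemma telescope_Ico (f : ℕ → ℤ) {a b : ℕ} (h : a ≤ b) :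
    ∑ i ∈ Finset.Ico a b, (f (i + 1) - f i) = f b - f a := by
  rw [Finset.sum_Ico_eq_sub _ h, Finset.sum_range_sub, Finset.sum_range_sub]; ring

lemma int_struct (ν' : ℕ) (hν : ν' ≤ g + 1) (Yz : ℕ → ℤ) (h0 : Yz 0 = 0)
    (htop : Yz (g + 1) = 0)
    (hS : (∑ i ∈ range (g + 1), (Yz (i + 1) - Yz i) ^ 2) = 2 * Yz ν') :
    ∀ n, 1 ≤ n → n ≤ g → 0 ≤ Yz n ∧ Yz n ≤ g := by
  set A : ℕ → ℤ := fun i => Yz (i + 1) - Yz i with hA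
  have hsplit : (∑ i ∈ range (g + 1), A i ^ 2)
      = (∑ i ∈ Finset.Ico 0 ν', A i ^ 2) + ∑ i ∈ Finset.Ico ν' (g + 1), A i ^ 2 := by
    rw [Finset.sum_Ico_consecutive _ (Nat.zero_le _) hν, Finset.range_eq_Ico]
  have htel1 : (∑ i ∈ Finset.Ico 0 ν', A i) = Yz ν' := by
    rw [telescope_Ico _ (Nat.zero_le _), h0, sub_zero]
  have htel2 : (∑ i ∈ Finset.Ico ν' (g + 1), A i) = -Yz ν' := by
    rw [telescope_Ico _ hν, htop, zero_sub]
  have hP1 : Yz ν' ≤ ∑ i ∈ Finset.Ico 0 ν', A i ^ 2 := by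
    rw [← htel1]; exact Finset.sum_le_sum fun i _ => int_le_sq (A i)
  have hP2 : Yz ν' ≤ ∑ i ∈ Finset.Ico ν' (g + 1), A i ^ 2 := by
    calc Yz ν' = ∑ i ∈ Finset.Ico ν' (g + 1), -A i := by
          rw [Finset.sum_neg_distrib, htel2, neg_neg]
    _ ≤ _ := Finset.sum_le_sum fun i _ => int_neg_le_sq (A i)
  rw [hsplit] at hS
  have hP1e : (∑ i ∈ Finset.Ico 0 ν', A i ^ 2) = Yz ν' := by linarith
  have hP2e : (∑ i ∈ Finset.Ico ν' (g + 1), A i ^ 2) = Yz ν' := by linarith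
  have hA1 : ∀ i ∈ Finset.Ico 0 ν', 0 ≤ A i ∧ A i ≤ 1 := by
    have hz : (∑ i ∈ Finset.Ico 0 ν', (A i ^ 2 - A i)) = 0 := by
      rw [Finset.sum_sub_distrib, hP1e, htel1, sub_self]
    intro i hi
    have h1 := (Finset.sum_eq_zero_iff_of_nonneg
      (fun j _ => by nlinarith [int_le_sq (A j)] :
        ∀ j ∈ Finset.Ico 0 ν', (0:ℤ) ≤ A j ^ 2 - A j)).mp hz i hi
    exact ⟨by nlinarith [sq_nonneg (A i)], by nlinarith [sq_nonneg (A i - 1)]⟩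
  have hA2 : ∀ i ∈ Finset.Ico ν' (g + 1), -1 ≤ A i ∧ A i ≤ 0 := by
    have hz : (∑ i ∈ Finset.Ico ν' (g + 1), (A i ^ 2 + A i)) = 0 := by
      rw [Finset.sum_add_distrib, hP2e, htel2]; ring
    intro i hi
    have h1 := (Finset.sum_eq_zero_iff_of_nonneg
      (fun j _ => by nlinarith [int_neg_le_sq (A j)] :
        ∀ j ∈ Finset.Ico ν' (g + 1), (0:ℤ) ≤ A j ^ 2 + A j)).mp hz i hi
    exact ⟨by nlinarith [sq_nonneg (A i + 1)], by nlinarith [sq_nonneg (A i)]⟩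
  intro n h1n hng
  have htel3 : (∑ i ∈ Finset.Ico 0 n, A i) = Yz n := by
    rw [telescope_Ico _ (Nat.zero_le _), h0, sub_zero]
  have htel4 : (∑ i ∈ Finset.Ico n (g + 1), A i) = -Yz n := by
    rw [telescope_Ico _ (by omega), htop, zero_sub]
  rcases le_or_gt n ν' with hcase | hcase
  · have hsub : Finset.Ico 0 n ⊆ Finset.Ico 0 ν' := Finset.Ico_subset_Ico le_rfl hcase
    constructor
    · rw [← htel3]; exact Finset.sum_nonneg fun i hi => (hA1 i (hsub hi)).1
    · calc Yz n = ∑ i ∈ Finset.Ico 0 n, A i := htel3.symm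
        _ ≤ ∑ i ∈ Finset.Ico 0 n, 1 := Finset.sum_le_sum fun i hi => (hA1 i (hsub hi)).2
        _ = n := by simp
        _ ≤ g := by exact_mod_cast hng
  · have hsub : Finset.Ico n (g + 1) ⊆ Finset.Ico ν' (g + 1) :=
      Finset.Ico_subset_Ico (by omega) le_rfl
    constructor
    · have h2 : (∑ i ∈ Finset.Ico n (g + 1), A i) ≤ 0 :=
        Finset.sum_nonpos fun i hi => (hA2 i (hsub hi)).2
      omega
    · have h3 : -((g + 1 - n : ℕ) : ℤ) ≤ ∑ i ∈ Finset.Ico n (g + 1), A i := by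
        calc -((g + 1 - n : ℕ) : ℤ) = ∑ i ∈ Finset.Ico n (g + 1), (-1 : ℤ) := by
              rw [Finset.sum_const, Nat.card_Ico]; push_cast [Nat.le_of_lt_succ]; ring
        _ ≤ _ := Finset.sum_le_sum fun i hi => (hA2 i (hsub hi)).1
      have h4 : ((g + 1 - n : ℕ) : ℤ) ≤ g := by omega
      omega
end DtilAux
namespace DtilAux
open TropToda Finset Matrix
variable {g : ℕ}

lemma even_S (Yz : ℕ → ℤ) (h0 : Yz 0 = 0) (htop : Yz (g + 1) = 0) :
    Even (∑ i ∈ range (g + 1), (Yz (i + 1) - Yz i) ^ 2) := by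
  have h1 : (∑ i ∈ range (g + 1), (Yz (i + 1) - Yz i)) = 0 := by
    rw [Finset.sum_range_sub, htop, h0, sub_zero]
  have h2 : (∑ i ∈ range (g + 1), (Yz (i + 1) - Yz i) ^ 2)
      = ∑ i ∈ range (g + 1), ((Yz (i + 1) - Yz i) ^ 2 - (Yz (i + 1) - Yz i)) := by
    rw [Finset.sum_sub_distrib, h1, sub_zero]
  rw [h2]
  apply Finset.even_sum
  intro i _
  have := Int.even_mul_succ_self (Yz (i + 1) - Yz i - 1)
  have heq : (Yz (i + 1) - Yz i - 1) * (Yz (i + 1) - Yz i - 1 + 1)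
      = (Yz (i + 1) - Yz i) ^ 2 - (Yz (i + 1) - Yz i) := by ring
  rwa [heq] at this

/-- integer extension -/
def Ez (g : ℕ) (f : Fin g → ℤ) (n : ℕ) : ℤ :=
  if h : 1 ≤ n ∧ n ≤ g then f ⟨n - 1, by omega⟩ else 0

lemma Ez_cast (f : Fin g → ℤ) (n : ℕ) :
    ((Ez g f n : ℤ) : ℝ) = E g (fun i => (f i : ℝ)) n := by
  unfold Ez E; split_ifs <;> simp

lemma Ez_zero (f : Fin g → ℤ) : Ez g f 0 = 0 := by rw [Ez, dif_neg]; omega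

lemma Ez_of_gt (f : Fin g → ℤ) {n : ℕ} (h : g < n) : Ez g f n = 0 := by
  rw [Ez, dif_neg]; omega

lemma Ez_succ (f : Fin g → ℤ) (i : Fin g) : Ez g f ((i : ℕ) + 1) = f i := by
  rw [Ez, dif_pos ⟨by omega, i.2⟩]
  exact congrArg f (Fin.ext (by simp))

lemma telescope_Ico_real (f : ℕ → ℝ) {a b : ℕ} (h : a ≤ b) :
    ∑ i ∈ Finset.Ico a b, (f (i + 1) - f i) = f b - f a := by
  rw [Finset.sum_Ico_eq_sub _ h, Finset.sum_range_sub, Finset.sum_range_sub]; ring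

lemma four_Y_le (ν' : ℕ) (hν : ν' ≤ g + 1) (Y : ℕ → ℝ) (h0 : Y 0 = 0)
    (htop : Y (g + 1) = 0) :
    4 * Y ν' ≤ (∑ i ∈ range (g + 1), (Y (i + 1) - Y i) ^ 2) + (g + 1) := by
  have hsplit : (∑ i ∈ range (g + 1), (Y (i + 1) - Y i) ^ 2)
      = (∑ i ∈ Finset.Ico 0 ν', (Y (i + 1) - Y i) ^ 2)
        + ∑ i ∈ Finset.Ico ν' (g + 1), (Y (i + 1) - Y i) ^ 2 := by
    rw [Finset.sum_Ico_consecutive _ (Nat.zero_le _) hν, Finset.range_eq_Ico]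
  have htel1 : (∑ i ∈ Finset.Ico 0 ν', (Y (i + 1) - Y i)) = Y ν' := by
    rw [telescope_Ico_real _ (Nat.zero_le _), h0, sub_zero]
  have htel2 : (∑ i ∈ Finset.Ico ν' (g + 1), (Y (i + 1) - Y i)) = -Y ν' := by
    rw [telescope_Ico_real _ hν, htop, zero_sub]
  have h1 : 2 * Y ν' ≤ (∑ i ∈ Finset.Ico 0 ν', (Y (i + 1) - Y i) ^ 2) + ν' := by
    calc 2 * Y ν' = ∑ i ∈ Finset.Ico 0 ν', (2 * (Y (i + 1) - Y i)) := by
          rw [← Finset.mul_sum, htel1]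
    _ ≤ ∑ i ∈ Finset.Ico 0 ν', ((Y (i + 1) - Y i) ^ 2 + 1) :=
        Finset.sum_le_sum fun i _ => by nlinarith [sq_nonneg (Y (i + 1) - Y i - 1)]
    _ = _ := by rw [Finset.sum_add_distrib, Finset.sum_const, Nat.card_Ico]; simp
  have h2 : 2 * Y ν' ≤ (∑ i ∈ Finset.Ico ν' (g + 1), (Y (i + 1) - Y i) ^ 2)
      + ((g + 1 : ℕ) - ν' : ℕ) := by
    calc 2 * Y ν' = ∑ i ∈ Finset.Ico ν' (g + 1), (-2 * (Y (i + 1) - Y i)) := by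
          rw [← Finset.mul_sum, htel2]; ring
    _ ≤ ∑ i ∈ Finset.Ico ν' (g + 1), ((Y (i + 1) - Y i) ^ 2 + 1) :=
        Finset.sum_le_sum fun i _ => by nlinarith [sq_nonneg (Y (i + 1) - Y i + 1)]
    _ = _ := by rw [Finset.sum_add_distrib, Finset.sum_const, Nat.card_Ico]; simp
  have hcard : (ν' : ℝ) + ((g + 1 : ℕ) - ν' : ℕ) = (g + 1 : ℝ) := by
    push_cast [Nat.cast_sub hν]; ring
  rw [hsplit]; push_cast at hcard ⊢; linarith

lemma sq_le_S (Y : ℕ → ℝ) (h0 : Y 0 = 0) {n : ℕ} (hn : n ≤ g + 1) :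
    Y n ^ 2 ≤ (g + 1) * ∑ i ∈ range (g + 1), (Y (i + 1) - Y i) ^ 2 := by
  have hYn : Y n = ∑ i ∈ range n, ((Y (i + 1) - Y i) * 1) := by
    simp only [mul_one]; rw [Finset.sum_range_sub, h0, sub_zero]
  have hcs := Finset.sum_mul_sq_le_sq_mul_sq (range n) (fun i => Y (i + 1) - Y i) (fun _ => 1)
  rw [← hYn] at hcs
  simp only [one_pow, Finset.sum_const, Finset.card_range, nsmul_eq_mul, smul_eq_mul,
    mul_one] at hcs
  have hsub : (∑ i ∈ range n, (Y (i + 1) - Y i) ^ 2)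
      ≤ ∑ i ∈ range (g + 1), (Y (i + 1) - Y i) ^ 2 :=
    Finset.sum_le_sum_of_subset_of_nonneg (Finset.range_subset_range.mpr hn)
      (fun i _ _ => sq_nonneg _)
  have hn' : (n : ℝ) ≤ (g + 1 : ℝ) := by exact_mod_cast hn
  have hS0 : (0:ℝ) ≤ ∑ i ∈ range n, (Y (i + 1) - Y i) ^ 2 :=
    Finset.sum_nonneg fun i _ => sq_nonneg _
  have hn0 : (0:ℝ) ≤ (n : ℝ) := Nat.cast_nonneg n
  have hprod : (∑ i ∈ range n, (Y (i + 1) - Y i) ^ 2) * n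
      ≤ (∑ i ∈ range (g + 1), (Y (i + 1) - Y i) ^ 2) * (g + 1) :=
    mul_le_mul hsub hn' hn0 (le_trans hS0 hsub)
  calc Y n ^ 2 ≤ (∑ i ∈ range n, (Y (i + 1) - Y i) ^ 2) * n := hcs
    _ ≤ (∑ i ∈ range (g + 1), (Y (i + 1) - Y i) ^ 2) * (g + 1) := hprod
    _ = (g + 1) * ∑ i ∈ range (g + 1), (Y (i + 1) - Y i) ^ 2 := by ring

lemma mJ_dot (hg : 0 < g) (ν : ℤ) (hν0 : 0 ≤ ν) (hνg : ν ≤ (g : ℤ) + 1) (y : Fin g → ℝ) :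
    Matrix.vecMul (fun i : Fin g => ((max 0 (ν - 1 - (i : ℕ)) : ℤ) : ℝ)) (Jmat g) ⬝ᵥ y
      = (ν : ℝ) * E g y 1 - E g y ν.toNat := by
  rw [J_bilinear hg]
  set mz : Fin g → ℤ := fun i : Fin g => max 0 (ν - 1 - (i : ℕ)) with hmz
  have hEz : ∀ n, Ez g mz n = if 1 ≤ n ∧ n ≤ g then max 0 (ν - n) else 0 := by
    intro n
    unfold Ez
    split_ifs with h
    · simp only [hmz]
      have hc : (((n - 1 : ℕ)) : ℤ) = (n : ℤ) - 1 := by omega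
      rw [hc]
      omega
    · rfl
  have hpt : ∀ i ∈ range (g + 1),
      (E g (fun j => ((mz j : ℤ) : ℝ)) (i + 1) - E g (fun j => ((mz j : ℤ) : ℝ)) i)
          * (E g y (i + 1) - E g y i)
      = (((if i = 0 then max 0 (ν - 1) else if (i : ℤ) < ν then -1 else 0 : ℤ)) : ℝ)
          * (E g y (i + 1) - E g y i) := by
    intro i hi
    rw [Finset.mem_range] at hi
    rw [← Ez_cast, ← Ez_cast, ← Int.cast_sub]
    congr 1
    rw [Int.cast_inj]
    rw [hEz (i + 1), hEz i]
    have hc : ((i + 1 : ℕ) : ℤ) = (i : ℤ) + 1 := by push_cast; ring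
    rcases Nat.eq_zero_or_pos i with h0 | h0
    · subst h0
      rw [if_pos (⟨le_rfl, hg⟩ : 1 ≤ 0 + 1 ∧ 0 + 1 ≤ g), if_neg (by omega), if_pos rfl]
      push_cast
      omega
    · rw [if_neg (by omega : ¬ i = 0)]
      rcases le_or_gt (i + 1) g with h1 | h1
      · rw [if_pos ⟨by omega, h1⟩, if_pos ⟨h0, by omega⟩, hc]
        by_cases hc2 : (i : ℤ) < ν
        · rw [if_pos hc2]; omega
        · rw [if_neg hc2]; omega
      · rw [if_neg (by omega), if_pos ⟨h0, by omega⟩]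
        by_cases hc2 : (i : ℤ) < ν
        · rw [if_pos hc2]; omega
        · rw [if_neg hc2]; omega
  rw [Finset.sum_congr rfl hpt]
  rw [Finset.range_eq_Ico, Finset.sum_eq_sum_Ico_succ_bot (by omega : 0 < g + 1)]
  rw [if_pos rfl]
  have hrest : (∑ i ∈ Finset.Ico 1 (g + 1),
      (((if i = 0 then max 0 (ν - 1) else if (i : ℤ) < ν then -1 else 0 : ℤ)) : ℝ)
        * (E g y (i + 1) - E g y i))
      = if 1 ≤ ν.toNat then -(E g y ν.toNat - E g y 1) else 0 := by
    have hpt2 : ∀ i ∈ Finset.Ico 1 (g + 1),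
        (((if i = 0 then max 0 (ν - 1) else if (i : ℤ) < ν then -1 else 0 : ℤ)) : ℝ)
          * (E g y (i + 1) - E g y i)
        = if i < ν.toNat then -(E g y (i + 1) - E g y i) else 0 := by
      intro i hi
      rw [Finset.mem_Ico] at hi
      rw [if_neg (by omega)]
      by_cases hc : (i : ℤ) < ν
      · rw [if_pos hc, if_pos (by omega)]; push_cast; ring
      · rw [if_neg hc, if_neg (by omega)]; push_cast; ring
    rw [Finset.sum_congr rfl hpt2]
    rw [← Finset.sum_filter]
    rw [Finset.Ico_filter_lt 1 (g + 1) ν.toNat]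
    have hmin : min (g + 1) ν.toNat = ν.toNat := by omega
    rw [hmin]
    rcases le_or_gt 1 ν.toNat with h | h
    · rw [if_pos h, Finset.sum_neg_distrib, telescope_Ico_real _ h]
    · rw [if_neg (by omega)]
      have : ν.toNat = 0 := by omega
      rw [this]
      simp
  rw [hrest, E_zero]
  rcases le_or_gt 1 ν.toNat with h | h
  · rw [if_pos h]
    have hm : ((max 0 (ν - 1) : ℤ) : ℝ) = (ν : ℝ) - 1 := by
      rw [max_eq_right (by omega)]; push_cast; ring
    rw [hm]; ring
  · rw [if_neg (by omega)]
    have h1 : ν.toNat = 0 := by omega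
    have h0 : ν = 0 := by omega
    rw [h1, h0]
    norm_num [E_zero]

lemma lamvec_pos {C : ℤ → ℝ} (hC : Generic g C) (i : Fin g) : 0 < lamvec g C i := by
  have hig := i.2
  unfold lamvec lam
  rw [if_neg (by omega : ¬((i : ℕ) + 1 = 0))]
  rcases Nat.eq_zero_or_pos (i : ℕ) with h | h
  · rw [if_pos h, h]
    have e1 : (g : ℤ) - ((0 + 1 : ℕ) : ℤ) = (g : ℤ) - 1 := by push_cast; ring
    rw [e1]
    have e2 : (g : ℤ) - 1 + 1 = (g : ℤ) := by ring
    rw [e2]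
    have h3 := hC.2.2
    linarith
  · rw [if_neg (by omega : ¬((i : ℕ) = 0))]
    have h3 := hC.2.1 ((g : ℤ) - (i : ℕ) - 1) (by omega) (by omega)
    have e1 : (g : ℤ) - (((i : ℕ) + 1 : ℕ) : ℤ) = (g : ℤ) - (i : ℕ) - 1 := by push_cast; ring
    rw [e1]
    have e2 : (g : ℤ) - (i : ℕ) - 1 + 1 = (g : ℤ) - (i : ℕ) := by ring
    have e3 : (g : ℤ) - (i : ℕ) - 1 + 2 = (g : ℤ) - (i : ℕ) + 1 := by ring
    rw [e2]
    rw [e2, e3] at h3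
    linarith

end DtilAux
namespace DtilAux
open TropToda Finset Matrix
variable {g : ℕ}

lemma abs_sum_abs (M : Matrix (Fin g) (Fin g) ℝ) (i j : Fin g) :
    |M i j| ≤ ∑ a : Fin g, ∑ b : Fin g, |M a b| := by
  calc |M i j| ≤ ∑ b : Fin g, |M i b| :=
        Finset.single_le_sum (fun b _ => abs_nonneg (M i b)) (mem_univ j)
  _ ≤ ∑ a : Fin g, ∑ b : Fin g, |M a b| :=
        Finset.single_le_sum (fun a (_ : a ∈ univ) => Finset.sum_nonneg
          fun b _ => abs_nonneg (M a b)) (mem_univ i)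

lemma quad_lower_sq (M : Matrix (Fin g) (Fin g) ℝ) (u : Fin g → ℝ) (s2 : ℝ)
    (hs : ∀ i, u i ^ 2 ≤ s2) :
    -((∑ a : Fin g, ∑ b : Fin g, |M a b|) * s2) ≤ Matrix.vecMul u M ⬝ᵥ u := by
  rw [vecMul_dot]
  have hterm : ∀ j : Fin g, ∀ i : Fin g, -(|M i j| * s2) ≤ u i * M i j * u j := by
    intro j i
    have h1 : |u i * u j| ≤ s2 := by
      rw [abs_mul]
      nlinarith [hs i, hs j, sq_abs (u i), sq_abs (u j), sq_nonneg (|u i| - |u j|),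
        abs_nonneg (u i), abs_nonneg (u j)]
    have h2 : |u i * M i j * u j| ≤ |M i j| * s2 := by
      have : |u i * M i j * u j| = |M i j| * |u i * u j| := by
        rw [abs_mul, abs_mul]; ring_nf; rw [abs_mul]; ring
      rw [this]
      exact mul_le_mul_of_nonneg_left h1 (abs_nonneg _)
    linarith [neg_abs_le (u i * M i j * u j)]
  calc -((∑ a : Fin g, ∑ b : Fin g, |M a b|) * s2)
      = ∑ a : Fin g, ∑ b : Fin g, -(|M a b| * s2) := by
        simp [Finset.sum_mul, Finset.sum_neg_distrib]
    _ = ∑ b : Fin g, ∑ a : Fin g, -(|M a b| * s2) := Finset.sum_comm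
    _ ≤ ∑ j : Fin g, ∑ i : Fin g, u i * M i j * u j := by
        apply Finset.sum_le_sum; intro j _
        apply Finset.sum_le_sum; intro i _
        exact hterm j i
    _ = ∑ j : Fin g, (∑ i : Fin g, u i * M i j) * u j := by
        apply Finset.sum_congr rfl; intro j _
        rw [Finset.sum_mul]
  
lemma bilinear_lower (M : Matrix (Fin g) (Fin g) ℝ) (u v : Fin g → ℝ) (a b : ℝ)
    (hu : ∀ i, |u i| ≤ a) (hv : ∀ j, |v j| ≤ b) (ha : 0 ≤ a) (hb : 0 ≤ b) :
    -((∑ i : Fin g, ∑ j : Fin g, |M i j|) * (a * b)) ≤ Matrix.vecMul u M ⬝ᵥ v := by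
  rw [vecMul_dot]
  have hterm : ∀ j : Fin g, ∀ i : Fin g, -(|M i j| * (a * b)) ≤ u i * M i j * v j := by
    intro j i
    have h2 : |u i * M i j * v j| ≤ |M i j| * (a * b) := by
      have he : |u i * M i j * v j| = |M i j| * (|u i| * |v j|) := by
        rw [abs_mul, abs_mul]; ring
      rw [he]
      apply mul_le_mul_of_nonneg_left _ (abs_nonneg _)
      exact mul_le_mul (hu i) (hv j) (abs_nonneg _) ha
    linarith [neg_abs_le (u i * M i j * v j)]
  calc -((∑ i : Fin g, ∑ j : Fin g, |M i j|) * (a * b))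
      = ∑ i : Fin g, ∑ j : Fin g, -(|M i j| * (a * b)) := by
        simp [Finset.sum_mul, Finset.sum_neg_distrib]
    _ = ∑ j : Fin g, ∑ i : Fin g, -(|M i j| * (a * b)) := Finset.sum_comm
    _ ≤ ∑ j : Fin g, ∑ i : Fin g, u i * M i j * v j := by
        apply Finset.sum_le_sum; intro j _
        apply Finset.sum_le_sum; intro i _
        exact hterm j i
    _ = ∑ j : Fin g, (∑ i : Fin g, u i * M i j) * v j := by
        apply Finset.sum_congr rfl; intro j _
        rw [Finset.sum_mul]

lemma dot_lower (v w : Fin g → ℝ) (b : ℝ) (hb : 0 ≤ b) (hv : ∀ i, |v i| ≤ b) :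
    -(b * ∑ i : Fin g, |w i|) ≤ v ⬝ᵥ w := by
  rw [dotProduct]
  calc -(b * ∑ i : Fin g, |w i|) = ∑ i : Fin g, -(b * |w i|) := by
        rw [Finset.mul_sum, Finset.sum_neg_distrib]
    _ ≤ ∑ i : Fin g, v i * w i := by
        apply Finset.sum_le_sum; intro i _
        have : |v i * w i| ≤ b * |w i| := by
          rw [abs_mul]
          exact mul_le_mul_of_nonneg_right (hv i) (abs_nonneg _)
        linarith [neg_abs_le (v i * w i)]

lemma abs_le_one_add_sq (a : ℝ) : |a| ≤ 1 + a ^ 2 := by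
  nlinarith [sq_abs a, sq_nonneg (|a| - 1), abs_nonneg a]

lemma dot_ps_lower (v w : Fin g → ℝ) (lo : ℝ) (hv : ∀ i, 0 ≤ v i) (hw : ∀ i, lo ≤ w i) :
    lo * (∑ i : Fin g, v i) ≤ v ⬝ᵥ w := by
  rw [dotProduct, Finset.mul_sum]
  apply Finset.sum_le_sum
  intro i _
  calc lo * v i ≤ w i * v i := mul_le_mul_of_nonneg_right (hw i) (hv i)
    _ = v i * w i := by ring

end DtilAux
namespace DtilAux
open TropToda Finset Matrix
variable {g : ℕ}

lemma int_two_mul_le (ν' : ℕ) (hν : ν' ≤ g + 1) (Yz : ℕ → ℤ) (h0 : Yz 0 = 0)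
    (htop : Yz (g + 1) = 0) :
    2 * Yz ν' ≤ ∑ i ∈ range (g + 1), (Yz (i + 1) - Yz i) ^ 2 := by
  have hsplit : (∑ i ∈ range (g + 1), (Yz (i + 1) - Yz i) ^ 2)
      = (∑ i ∈ Finset.Ico 0 ν', (Yz (i + 1) - Yz i) ^ 2)
        + ∑ i ∈ Finset.Ico ν' (g + 1), (Yz (i + 1) - Yz i) ^ 2 := by
    rw [Finset.sum_Ico_consecutive _ (Nat.zero_le _) hν, Finset.range_eq_Ico]
  have htel1 : (∑ i ∈ Finset.Ico 0 ν', (Yz (i + 1) - Yz i)) = Yz ν' := by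
    rw [telescope_Ico _ (Nat.zero_le _), h0, sub_zero]
  have htel2 : (∑ i ∈ Finset.Ico ν' (g + 1), (Yz (i + 1) - Yz i)) = -Yz ν' := by
    rw [telescope_Ico _ hν, htop, zero_sub]
  have hP1 : Yz ν' ≤ ∑ i ∈ Finset.Ico 0 ν', (Yz (i + 1) - Yz i) ^ 2 := by
    rw [← htel1]; exact Finset.sum_le_sum fun i _ => int_le_sq _
  have hP2 : Yz ν' ≤ ∑ i ∈ Finset.Ico ν' (g + 1), (Yz (i + 1) - Yz i) ^ 2 := by
    calc Yz ν' = ∑ i ∈ Finset.Ico ν' (g + 1), -(Yz (i + 1) - Yz i) := by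
          rw [Finset.sum_neg_distrib, htel2, neg_neg]
    _ ≤ _ := Finset.sum_le_sum fun i _ => int_neg_le_sq _
  linarith

lemma E_one (hg : 0 < g) (f : Fin g → ℝ) : E g f 1 = f ⟨0, hg⟩ := by
  rw [E, dif_pos ⟨le_rfl, hg⟩]

end DtilAux

namespace DtilAux
open TropToda Finset Matrix
variable {g : ℕ}

lemma vecMul_add_smul_dot (A B : Matrix (Fin g) (Fin g) ℝ) (c : ℝ) (v w : Fin g → ℝ) :
    Matrix.vecMul v (A + c • B) ⬝ᵥ w
      = Matrix.vecMul v A ⬝ᵥ w + c * (Matrix.vecMul v B ⬝ᵥ w) := by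
  rw [vecMul_dot, vecMul_dot, vecMul_dot]
  simp only [Matrix.add_apply, Matrix.smul_apply, smul_eq_mul]
  rw [Finset.mul_sum, ← Finset.sum_add_distrib]
  apply Finset.sum_congr rfl
  intro j _
  have h : (∑ i : Fin g, v i * (A i j + c * B i j))
      = (∑ i : Fin g, v i * A i j) + c * ∑ i : Fin g, v i * B i j := by
    rw [Finset.mul_sum, ← Finset.sum_add_distrib]
    exact Finset.sum_congr rfl fun i _ => by ring
  rw [h]; ring

end DtilAux

open DtilAux Finset Matrix

open TropToda in
/-- for `1 ≪ t ≪ δ` the points `Z* − (n−n_0)(L+δ)e_1 + tλ⃗` lie in the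
fundamental regions `D̃_{m_n}` with `m_n = 𝕀_1 + ⋯ + 𝕀_{n−n_0−1}`. -/
theorem Dtil_regions
    (g : ℕ) (hg : 0 < g) (C : ℤ → ℝ) (hC : Generic g C)
    (Zs : Fin g → ℝ) (n0 : ℤ) :
    ∃ t0 : ℤ, ∀ t : ℤ, t0 ≤ t → ∃ δ0 : ℝ, 0 < δ0 ∧ ∀ δ : ℝ, δ0 ≤ δ →
      ∀ n : ℤ, n0 ≤ n → n ≤ n0 + g + 1 →
        (fun i : Fin g =>
            Zs i - ((n : ℝ) - (n0 : ℝ)) * (Lc g C + δ) * e1 g i + (t : ℝ) * lamvec g C i)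
          ∈ Dset g (Kmat g C + δ • Jmat g)
              (fun i : Fin g => max 0 (n - n0 - 1 - (i : ℕ))) := by
  classical
  have hne : (univ : Finset (Fin g)).Nonempty := ⟨⟨0, hg⟩, mem_univ _⟩
  set κ : ℝ := ∑ a : Fin g, ∑ b : Fin g, |Kmat g C a b| with hκdef
  set Zb : ℝ := ∑ i : Fin g, |Zs i| with hZbdef
  set lamS : ℝ := ∑ i : Fin g, lamvec g C i with hlamSdef
  set lamM : ℝ := univ.inf' hne (lamvec g C) with hlamMdef
  set L : ℝ := Lc g C with hLdef
  have hκ0 : 0 ≤ κ := Finset.sum_nonneg fun a _ => Finset.sum_nonneg fun b _ => abs_nonneg _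
  have hZb0 : 0 ≤ Zb := Finset.sum_nonneg fun i _ => abs_nonneg _
  have hlampos : ∀ i : Fin g, 0 < lamvec g C i := fun i => lamvec_pos hC i
  have hlamS0 : 0 ≤ lamS := Finset.sum_nonneg fun i _ => (hlampos i).le
  have hlamM0 : 0 < lamM := by
    rw [hlamMdef, Finset.lt_inf'_iff]
    exact fun i _ => hlampos i
  have hlamMle : ∀ i : Fin g, lamM ≤ lamvec g C i := fun i => Finset.inf'_le _ (mem_univ i)
  have hlamabs : (∑ i : Fin g, |lamvec g C i|) = lamS :=
    Finset.sum_congr rfl fun i _ => abs_of_pos (hlampos i)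
  set B1 : ℝ := 2 * (g : ℝ) ^ 2 * κ + (g : ℝ) * Zb + ((g : ℝ) + 1) * |L| * g with hB1def
  refine ⟨max 1 ⌈B1 / lamM⌉, ?_⟩
  intro t ht
  have ht1 : (1 : ℤ) ≤ t := le_trans (le_max_left _ _) ht
  have htR0 : (0 : ℝ) ≤ (t : ℝ) := by exact_mod_cast le_trans zero_le_one ht1
  have htB1 : B1 ≤ (t : ℝ) * lamM := by
    have h1 : (⌈B1 / lamM⌉ : ℝ) ≤ (t : ℝ) := by exact_mod_cast le_trans (le_max_right _ _) ht
    have h2 := Int.le_ceil (B1 / lamM)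
    calc B1 = B1 / lamM * lamM := by field_simp
      _ ≤ (t : ℝ) * lamM := mul_le_mul_of_nonneg_right (le_trans h2 h1) hlamM0.le
  set V1 : ℝ := κ / 2 + (g : ℝ) * κ + Zb + ((g : ℝ) + 1) * |L| + (t : ℝ) * lamS with hV1def
  set V2 : ℝ := (g : ℝ) * κ + Zb + ((g : ℝ) + 1) * |L| + (t : ℝ) * lamS with hV2def
  have hV10 : 0 ≤ V1 := by
    have := mul_nonneg htR0 hlamS0
    have := mul_nonneg (by positivity : (0:ℝ) ≤ (g:ℝ)) hκ0
    have := mul_nonneg (by positivity : (0:ℝ) ≤ (g:ℝ) + 1) (abs_nonneg L)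
    rw [hV1def]; linarith
  have hV20 : 0 ≤ V2 := by
    have := mul_nonneg htR0 hlamS0
    have := mul_nonneg (by positivity : (0:ℝ) ≤ (g:ℝ)) hκ0
    have := mul_nonneg (by positivity : (0:ℝ) ≤ (g:ℝ) + 1) (abs_nonneg L)
    rw [hV2def]; linarith
  refine ⟨4 * (g : ℝ) * ((g : ℝ) + 1) * V1 + (g : ℝ) * ((g : ℝ) + 1) ^ 2 * V1 + V2 + 1, ?_, ?_⟩
  · have p1 : 0 ≤ 4 * (g : ℝ) * ((g : ℝ) + 1) * V1 :=
      mul_nonneg (by positivity) hV10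
    have p2 : 0 ≤ (g : ℝ) * ((g : ℝ) + 1) ^ 2 * V1 := mul_nonneg (by positivity) hV10
    linarith
  intro δ hδ n hn1 hn2
  have hν0 : (0 : ℤ) ≤ n - n0 := by omega
  have hνg : n - n0 ≤ (g : ℤ) + 1 := by omega
  have hδ0 : 0 ≤ δ := by
    have p1 : 0 ≤ 4 * (g : ℝ) * ((g : ℝ) + 1) * V1 := mul_nonneg (by positivity) hV10
    have p2 : 0 ≤ (g : ℝ) * ((g : ℝ) + 1) ^ 2 * V1 := mul_nonneg (by positivity) hV10
    linarith
  apply mem_Dset_of_min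
  intro x
  have hsym : ∀ i j, (Kmat g C + δ • Jmat g) i j = (Kmat g C + δ • Jmat g) j i := by
    intro i j
    simp only [Matrix.add_apply, Matrix.smul_apply, smul_eq_mul]
    rw [Kmat_symm, Jmat_symm]
  rw [thetaTerm_expand (Kmat g C + δ • Jmat g) hsym
    (fun i : Fin g => max 0 (n - n0 - 1 - ((i : ℕ) : ℤ))) x]
  apply le_add_of_nonneg_right
  -- abbreviations
  set m : Fin g → ℤ := fun i : Fin g => max 0 (n - n0 - 1 - ((i : ℕ) : ℤ)) with hmdef
  set yR : Fin g → ℝ := fun i => ((x i - m i : ℤ) : ℝ) with hyRdef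
  set mR : Fin g → ℝ := fun i => ((m i : ℤ) : ℝ) with hmRdef
  set yv : Fin g → ℤ := fun i => x i - m i with hyvdef
  have hfun : yR = fun i => ((yv i : ℤ) : ℝ) := by
    funext i; simp only [hyRdef, hyvdef]
  have hYc : ∀ k, E g yR k = ((Ez g yv k : ℤ) : ℝ) := by
    intro k; rw [hfun]; exact (Ez_cast yv k).symm
  set ν' : ℕ := (n - n0).toNat with hν'def
  have hν'le : ν' ≤ g + 1 := by omega
  set Sr : ℝ := ∑ i ∈ range (g + 1), (E g yR (i + 1) - E g yR i) ^ 2 with hSrdef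
  set Sz : ℤ := ∑ i ∈ range (g + 1), (Ez g yv (i + 1) - Ez g yv i) ^ 2 with hSzdef
  have hScast : Sr = ((Sz : ℤ) : ℝ) := by
    rw [hSrdef, hSzdef]
    push_cast
    exact Finset.sum_congr rfl fun i _ => by rw [hYc, hYc]
  have hEz0 : Ez g yv 0 = 0 := Ez_zero yv
  have hEztop : Ez g yv (g + 1) = 0 := Ez_of_gt yv (Nat.lt_succ_self g)
  have hE0 : E g yR 0 = 0 := E_zero yR
  have hEtop : E g yR (g + 1) = 0 := E_of_gt yR (Nat.lt_succ_self g)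
  -- the three decomposition identities
  have e1' : Matrix.vecMul yR (Kmat g C + δ • Jmat g) ⬝ᵥ yR
      = Matrix.vecMul yR (Kmat g C) ⬝ᵥ yR + δ * Sr := by
    rw [vecMul_add_smul_dot, J_bilinear hg, hSrdef]
    congr 1
    rw [mul_eq_mul_left_iff]
    left
    exact Finset.sum_congr rfl fun i _ => (pow_two _).symm
  have e2' : Matrix.vecMul mR (Kmat g C + δ • Jmat g) ⬝ᵥ yR
      = Matrix.vecMul mR (Kmat g C) ⬝ᵥ yR
        + δ * (((n - n0 : ℤ) : ℝ) * E g yR 1 - E g yR ν') := by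
    rw [vecMul_add_smul_dot]
    congr 1
    rw [mul_eq_mul_left_iff]
    left
    have := mJ_dot hg (n - n0) hν0 hνg yR
    rw [hmRdef, hmdef]
    exact this
  have he1sum : (∑ i : Fin g, yR i * e1 g i) = E g yR 1 := by
    calc (∑ i : Fin g, yR i * e1 g i) = ∑ i : Fin g, if i = ⟨0, hg⟩ then yR i else 0 := by
          apply Finset.sum_congr rfl
          intro i _
          unfold e1
          by_cases h : i = (⟨0, hg⟩ : Fin g)
          · rw [if_pos (show (i : ℕ) = 0 by rw [h]), if_pos h]; ring
          · rw [if_neg (fun hc => h (Fin.ext hc)), if_neg h]; ring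
      _ = yR ⟨0, hg⟩ := by rw [Finset.sum_ite_eq' univ _ yR, if_pos (mem_univ _)]
      _ = E g yR 1 := (E_one hg yR).symm
  have e3' : (yR ⬝ᵥ fun i : Fin g =>
        Zs i - ((n : ℝ) - (n0 : ℝ)) * (Lc g C + δ) * e1 g i + (t : ℝ) * lamvec g C i)
      = yR ⬝ᵥ Zs - ((n : ℝ) - (n0 : ℝ)) * (L + δ) * E g yR 1
        + (t : ℝ) * (yR ⬝ᵥ lamvec g C) := by
    simp only [dotProduct]
    have hterm : ∀ i : Fin g, yR i * (Zs i - ((n : ℝ) - (n0 : ℝ)) * (Lc g C + δ) * e1 g i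
          + (t : ℝ) * lamvec g C i)
        = yR i * Zs i - ((n : ℝ) - (n0 : ℝ)) * (Lc g C + δ) * (yR i * e1 g i)
          + (t : ℝ) * (yR i * lamvec g C i) := fun i => by ring
    rw [Finset.sum_congr rfl fun i _ => hterm i, Finset.sum_add_distrib,
      Finset.sum_sub_distrib, ← Finset.mul_sum, ← Finset.mul_sum, he1sum, hLdef]
  rw [e1', e2', e3']
  have hcastνn : ((n - n0 : ℤ) : ℝ) = (n : ℝ) - (n0 : ℝ) := by push_cast; ring
  set c : ℝ := 1 / 2 * Sr - E g yR ν' with hcdef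
  set q : ℝ := 1 / 2 * (Matrix.vecMul yR (Kmat g C) ⬝ᵥ yR)
      + Matrix.vecMul mR (Kmat g C) ⬝ᵥ yR + yR ⬝ᵥ Zs
      + (t : ℝ) * (yR ⬝ᵥ lamvec g C) - ((n : ℝ) - (n0 : ℝ)) * L * E g yR 1 with hqdef
  have hsplitR : 1 / 2 * (Matrix.vecMul yR (Kmat g C) ⬝ᵥ yR + δ * Sr)
      + (Matrix.vecMul mR (Kmat g C) ⬝ᵥ yR
        + δ * (((n - n0 : ℤ) : ℝ) * E g yR 1 - E g yR ν'))
      + (yR ⬝ᵥ Zs - ((n : ℝ) - (n0 : ℝ)) * (L + δ) * E g yR 1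
        + (t : ℝ) * (yR ⬝ᵥ lamvec g C))
      = δ * c + q := by
    rw [hcdef, hqdef, hcastνn]; ring
  rw [hsplitR]
  -- integer structure
  have hSz2 : 2 * Ez g yv ν' ≤ Sz := int_two_mul_le ν' hν'le (Ez g yv) hEz0 hEztop
  have hEven : Even Sz := even_S (Ez g yv) hEz0 hEztop
  obtain ⟨sz, hsz⟩ := hEven
  have hccast : c = ((sz - Ez g yv ν' : ℤ) : ℝ) := by
    rw [hcdef, hScast, hYc ν', hsz]
    push_cast
    ring
  have hcz0 : 0 ≤ sz - Ez g yv ν' := by omega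
  -- bounds on m
  have hmRb : ∀ i : Fin g, |mR i| ≤ (g : ℝ) := by
    intro i
    have h1 : (0 : ℤ) ≤ m i := by simp only [hmdef]; exact le_max_left _ _
    have h2 : m i ≤ g := by simp only [hmdef]; omega
    have h3 : mR i = ((m i : ℤ) : ℝ) := by simp only [hmRdef]
    rw [h3, abs_of_nonneg (by exact_mod_cast h1)]
    exact_mod_cast h2
  have hg0R : (0 : ℝ) ≤ (g : ℝ) := by positivity
  by_cases hczero : sz - Ez g yv ν' = 0
  · -- c = 0 case
    have hc0 : c = 0 := by rw [hccast, hczero]; simp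
    have hSz_eq : Sz = 2 * Ez g yv ν' := by omega
    have hbound := int_struct ν' hν'le (Ez g yv) hEz0 hEztop hSz_eq
    have hyi : ∀ i : Fin g, 0 ≤ yR i ∧ yR i ≤ (g : ℝ) := by
      intro i
      have h1 : yR i = ((Ez g yv ((i : ℕ) + 1) : ℤ) : ℝ) := by
        rw [Ez_succ]
      have h2 := hbound ((i : ℕ) + 1) (by omega) (by have := i.2; omega)
      rw [h1]
      exact ⟨by exact_mod_cast h2.1, by exact_mod_cast h2.2⟩
    have hyabs : ∀ i : Fin g, |yR i| ≤ (g : ℝ) := fun i => by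
      rw [abs_of_nonneg (hyi i).1]; exact (hyi i).2
    set σ : ℝ := ∑ i : Fin g, yR i with hσdef
    have hσ0 : 0 ≤ σ := Finset.sum_nonneg fun i _ => (hyi i).1
    have hσint : σ = ((∑ i : Fin g, yv i : ℤ) : ℝ) := by
      rw [hσdef]; push_cast
      exact Finset.sum_congr rfl fun i _ => by simp only [hfun]
    have hY1 : E g yR 1 = yR ⟨0, hg⟩ := E_one hg yR
    by_cases hσz : (∑ i : Fin g, yv i) = 0
    · -- y = 0
      have hyz : ∀ i : Fin g, yv i = 0 := by
        intro i
        have hnn : ∀ j ∈ univ, (0 : ℤ) ≤ yv j := by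
          intro j _
          have h5 := (hyi j).1
          simp only [hfun] at h5
          exact_mod_cast h5
        exact (Finset.sum_eq_zero_iff_of_nonneg hnn).mp hσz i (mem_univ i)
      have hyR0 : ∀ i : Fin g, yR i = 0 := fun i => by simp only [hfun, hyz i]; norm_num
      have hq0 : q = 0 := by
        rw [hqdef]
        have d1 : Matrix.vecMul yR (Kmat g C) ⬝ᵥ yR = 0 := by
          rw [vecMul_dot]; exact Finset.sum_eq_zero fun j _ => by rw [hyR0 j, mul_zero]
        have d2 : Matrix.vecMul mR (Kmat g C) ⬝ᵥ yR = 0 := by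
          rw [vecMul_dot]; exact Finset.sum_eq_zero fun j _ => by rw [hyR0 j, mul_zero]
        have d3 : yR ⬝ᵥ Zs = 0 := by
          rw [dotProduct]; exact Finset.sum_eq_zero fun j _ => by rw [hyR0 j, zero_mul]
        have d4 : yR ⬝ᵥ lamvec g C = 0 := by
          rw [dotProduct]; exact Finset.sum_eq_zero fun j _ => by rw [hyR0 j, zero_mul]
        have d5 : E g yR 1 = 0 := by rw [hY1, hyR0]
        rw [d1, d2, d3, d4, d5]; ring
      rw [hc0, hq0]; ring_nf; exact le_refl 0
    · -- σ ≥ 1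
      have hσ1 : (1 : ℝ) ≤ σ := by
        rw [hσint]
        have h1 : (1 : ℤ) ≤ ∑ i : Fin g, yv i := by
          have hnn : ∀ j ∈ univ, (0 : ℤ) ≤ yv j := by
            intro j _
            have h5 := (hyi j).1
            simp only [hfun] at h5
            exact_mod_cast h5
          have h0 : (0 : ℤ) ≤ ∑ i : Fin g, yv i := Finset.sum_nonneg hnn
          omega
        exact_mod_cast h1
      have hA := bilinear_lower (Kmat g C) yR yR (g : ℝ) (g : ℝ) hyabs hyabs hg0R hg0R
      have hB := bilinear_lower (Kmat g C) mR yR (g : ℝ) (g : ℝ) hmRb hyabs hg0R hg0R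
      have hD := dot_lower yR Zs (g : ℝ) hg0R hyabs
      rw [← hκdef] at hA hB
      rw [← hZbdef] at hD
      have hlamσ := dot_ps_lower yR (lamvec g C) lamM (fun i => (hyi i).1) hlamMle
      rw [← hσdef] at hlamσ
      have hY1b : 0 ≤ E g yR 1 ∧ E g yR 1 ≤ (g : ℝ) := by
        rw [hY1]; exact hyi _
      have hνR : |(n : ℝ) - (n0 : ℝ)| ≤ (g : ℝ) + 1 := by
        rw [abs_of_nonneg (by exact_mod_cast hν0 : (0:ℝ) ≤ (n:ℝ) - (n0:ℝ))]
        exact_mod_cast hνg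
      have hE : ((n : ℝ) - (n0 : ℝ)) * L * E g yR 1 ≤ ((g : ℝ) + 1) * |L| * (g : ℝ) := by
        calc ((n : ℝ) - (n0 : ℝ)) * L * E g yR 1
            ≤ |((n : ℝ) - (n0 : ℝ)) * L| * E g yR 1 :=
              mul_le_mul_of_nonneg_right (le_abs_self _) hY1b.1
          _ ≤ (((g : ℝ) + 1) * |L|) * (g : ℝ) := by
              rw [abs_mul]
              exact mul_le_mul (mul_le_mul_of_nonneg_right hνR (abs_nonneg L)) hY1b.2
                hY1b.1 (by positivity)
      have htlam : (t : ℝ) * (lamM * σ) ≤ (t : ℝ) * (yR ⬝ᵥ lamvec g C) :=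
        mul_le_mul_of_nonneg_left hlamσ htR0
      have hB1σ : B1 ≤ (t : ℝ) * lamM * σ := by
        have h1 : (t : ℝ) * lamM * 1 ≤ (t : ℝ) * lamM * σ :=
          mul_le_mul_of_nonneg_left hσ1 (mul_nonneg htR0 hlamM0.le)
        linarith
      rw [hc0, mul_zero, zero_add, hqdef]
      rw [hB1def] at hB1σ
      have hκg : 0 ≤ κ * ((g : ℝ) * (g : ℝ)) := mul_nonneg hκ0 (by positivity)
      linarith [hA, hB, hD, htlam, hE, hB1σ, hκg]
  · -- c ≥ 1 case
    have hc1 : (1 : ℝ) ≤ c := by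
      rw [hccast]
      exact_mod_cast (by omega : (1 : ℤ) ≤ sz - Ez g yv ν')
    set s2 : ℝ := ∑ i : Fin g, yR i ^ 2 with hs2def
    have hs2i : ∀ i : Fin g, yR i ^ 2 ≤ s2 := fun i =>
      Finset.single_le_sum (fun j _ => sq_nonneg (yR j)) (mem_univ i)
    have hs20 : 0 ≤ s2 := Finset.sum_nonneg fun i _ => sq_nonneg _
    have habs : ∀ i : Fin g, |yR i| ≤ 1 + s2 := fun i =>
      le_trans (abs_le_one_add_sq (yR i)) (by linarith [hs2i i])
    have h1s20 : (0 : ℝ) ≤ 1 + s2 := by linarith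
    have hs2S : s2 ≤ (g : ℝ) * ((g : ℝ) + 1) * Sr := by
      have hper : ∀ i : Fin g, yR i ^ 2 ≤ ((g : ℝ) + 1) * Sr := by
        intro i
        have h1 : yR i = E g yR ((i : ℕ) + 1) := (E_succ yR i).symm
        rw [h1, hSrdef]
        exact sq_le_S (E g yR) hE0 (by have := i.2; omega)
      calc s2 ≤ ∑ _i : Fin g, ((g : ℝ) + 1) * Sr := Finset.sum_le_sum fun i _ => hper i
        _ = (g : ℝ) * (((g : ℝ) + 1) * Sr) := by
            rw [Finset.sum_const, Finset.card_univ, Fintype.card_fin, nsmul_eq_mul]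
        _ = (g : ℝ) * ((g : ℝ) + 1) * Sr := by ring
    have hS4 : Sr ≤ 4 * c + ((g : ℝ) + 1) := by
      have h4 := four_Y_le ν' hν'le (E g yR) hE0 hEtop
      rw [← hSrdef] at h4
      rw [hcdef]
      push_cast at h4
      linarith
    have hSr0 : 0 ≤ Sr := by
      rw [hSrdef]; exact Finset.sum_nonneg fun i _ => sq_nonneg _
    have hA2 := quad_lower_sq (Kmat g C) yR s2 hs2i
    have hB2 := bilinear_lower (Kmat g C) mR yR (g : ℝ) (1 + s2) hmRb habs hg0R h1s20
    have hD2 := dot_lower yR Zs (1 + s2) h1s20 habs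
    have hlam2 := dot_lower yR (lamvec g C) (1 + s2) h1s20 habs
    rw [← hκdef] at hA2 hB2
    rw [← hZbdef] at hD2
    rw [hlamabs] at hlam2
    have htlam2 : -((t : ℝ) * ((1 + s2) * lamS)) ≤ (t : ℝ) * (yR ⬝ᵥ lamvec g C) := by
      have := mul_le_mul_of_nonneg_left hlam2 htR0
      calc -((t : ℝ) * ((1 + s2) * lamS)) = (t : ℝ) * (-((1 + s2) * lamS)) := by ring
        _ ≤ _ := this
    have hY1s : |E g yR 1| ≤ 1 + s2 := by
      rw [E_one hg yR]; exact habs _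
    have hνR : |(n : ℝ) - (n0 : ℝ)| ≤ (g : ℝ) + 1 := by
      rw [abs_of_nonneg (by exact_mod_cast hν0 : (0:ℝ) ≤ (n:ℝ) - (n0:ℝ))]
      exact_mod_cast hνg
    have hE2 : ((n : ℝ) - (n0 : ℝ)) * L * E g yR 1 ≤ ((g : ℝ) + 1) * |L| * (1 + s2) := by
      calc ((n : ℝ) - (n0 : ℝ)) * L * E g yR 1 ≤ |((n : ℝ) - (n0 : ℝ)) * L * E g yR 1| :=
            le_abs_self _
        _ = |(n : ℝ) - (n0 : ℝ)| * |L| * |E g yR 1| := by rw [abs_mul, abs_mul]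
        _ ≤ ((g : ℝ) + 1) * |L| * (1 + s2) := by
            apply mul_le_mul (mul_le_mul_of_nonneg_right hνR (abs_nonneg L)) hY1s
              (abs_nonneg _) (by positivity)
    -- q ≥ -V1 s2 - V2
    have hqlow : -(V1 * s2) - V2 ≤ q := by
      rw [hqdef, hV1def, hV2def]
      linarith [hA2, hB2, hD2, htlam2, hE2]
    have hchain : V1 * s2 ≤ V1 * ((g : ℝ) * ((g : ℝ) + 1) * (4 * c + ((g : ℝ) + 1))) := by
      apply mul_le_mul_of_nonneg_left _ hV10
      calc s2 ≤ (g : ℝ) * ((g : ℝ) + 1) * Sr := hs2S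
        _ ≤ (g : ℝ) * ((g : ℝ) + 1) * (4 * c + ((g : ℝ) + 1)) :=
            mul_le_mul_of_nonneg_left hS4 (by positivity)
    have hδA : 4 * (g : ℝ) * ((g : ℝ) + 1) * V1 ≤ δ := by
      have p2 : 0 ≤ (g : ℝ) * ((g : ℝ) + 1) ^ 2 * V1 := mul_nonneg (by positivity) hV10
      linarith
    have hkey : 1 * (δ - 4 * (g : ℝ) * ((g : ℝ) + 1) * V1)
        ≤ c * (δ - 4 * (g : ℝ) * ((g : ℝ) + 1) * V1) :=
      mul_le_mul_of_nonneg_right hc1 (by linarith)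
    linarith [hqlow, hchain, hkey, hδ]
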